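/- Let (X, 𝒜, μ) be a probability space and let {E_i}_{i∈ℕ} be a sequence of measurable subsets of X. Suppose that ∑_{i=1}^∞ μ(E_i) = ∞ and that there exists a constant C > 0 such that ∑_{s,t=1}^Q μ(E_s ∩ E_t) ≤ C (∑_{s=1}^Q μ(E_s))² for infinitely many Q ∈ ℕ. In addition, suppose property (M1) holds: for any δ > 0 and any natural numbers q₁ < q₂, setting A = ⋃_{j=q₁}^{q₂} E_j, there exists i₀ = i₀(q₁,q₂,δ) such that for all i ≥ i₀ one has μ(A ∩ E_i) ≤ (1+δ) μ(A) μ(E_i). Then μ(E_∞) = 1. -/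

import Mathlib

open MeasureTheory Filter Set
open scoped ENNReal Topology

lemma chung_erdos_ennreal {X : Type*} [MeasurableSpace X] (μ : Measure X)
    (F : ℕ → Set X) (hF : ∀ i, MeasurableSet (F i)) (s : Finset ℕ) :
    (∑ i ∈ s, μ (F i)) ^ 2 ≤ μ (⋃ i ∈ s, F i) * (∑ i ∈ s, ∑ j ∈ s, μ (F i ∩ F j)) := by
  set f : X → ℝ≥0∞ := fun x => ∑ i ∈ s, (F i).indicator 1 x with hfdef
  set U : Set X := ⋃ i ∈ s, F i with hUdef
  have hUm : MeasurableSet U := s.measurableSet_biUnion (fun i _ => hF i)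
  have hfm : Measurable f := by
    apply Finset.measurable_sum
    intro i _
    exact measurable_one.indicator (hF i)
  have h1 : ∫⁻ x, f x ∂μ = ∑ i ∈ s, μ (F i) := by
    rw [lintegral_finset_sum _ fun i _ => measurable_one.indicator (hF i)]
    simp only [lintegral_indicator_one (hF _)]
  have h2 : ∫⁻ x, f x * f x ∂μ = ∑ i ∈ s, ∑ j ∈ s, μ (F i ∩ F j) := by
    have : ∀ x, f x * f x = ∑ i ∈ s, ∑ j ∈ s, (F i ∩ F j).indicator (1 : X → ℝ≥0∞) x := by
      intro x
      rw [hfdef]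
      rw [Finset.sum_mul_sum]
      refine Finset.sum_congr rfl fun i _ => Finset.sum_congr rfl fun j _ => ?_
      rw [Set.inter_indicator_one]
      rfl
    simp only [this]
    rw [lintegral_finset_sum _ fun i _ => by
      exact Finset.measurable_sum _ fun j _ => measurable_one.indicator ((hF i).inter (hF j))]
    refine Finset.sum_congr rfl fun i _ => ?_
    rw [lintegral_finset_sum _ fun j _ => measurable_one.indicator ((hF i).inter (hF j))]
    simp only [lintegral_indicator_one ((hF _).inter (hF _))]
  have hsupp : ∀ x, f x = U.indicator (1 : X → ℝ≥0∞) x * f x := by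
    intro x
    by_cases hx : x ∈ U
    · simp [Set.indicator_of_mem hx]
    · have hfx : f x = 0 := by
        rw [hfdef]
        refine Finset.sum_eq_zero fun i hi => ?_
        exact Set.indicator_of_notMem (fun h => hx (Set.mem_biUnion hi h)) _
      simp [hfx]
  have holder : ∫⁻ x, f x ∂μ ≤ (μ U) ^ ((1:ℝ)/2) * (∫⁻ x, f x * f x ∂μ) ^ ((1:ℝ)/2) := by
    have hconj : Real.HolderConjugate 2 2 := Real.HolderConjugate.two_two
    have key := ENNReal.lintegral_mul_le_Lp_mul_Lq μ hconj
      (measurable_one.indicator hUm).aemeasurable hfm.aemeasurable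
    have e1 : ∫⁻ x, (U.indicator (1 : X → ℝ≥0∞) * f) x ∂μ = ∫⁻ x, f x ∂μ := by
      refine lintegral_congr fun x => ?_
      exact (hsupp x).symm
    have e2 : (∫⁻ x, (U.indicator (1 : X → ℝ≥0∞)) x ^ (2:ℝ) ∂μ) = μ U := by
      have : ∀ x, (U.indicator (1 : X → ℝ≥0∞)) x ^ (2:ℝ) = U.indicator 1 x := by
        intro x
        by_cases hx : x ∈ U <;> simp [Set.indicator_of_mem, Set.indicator_of_notMem, hx,
          ENNReal.rpow_two]
      simp only [this]
      exact lintegral_indicator_one hUm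
    have e3 : (∫⁻ x, f x ^ (2:ℝ) ∂μ) = ∫⁻ x, f x * f x ∂μ := by
      refine lintegral_congr fun x => ?_
      rw [ENNReal.rpow_two, sq]
    rw [e1, e2, e3] at key
    exact key
  calc (∑ i ∈ s, μ (F i)) ^ 2 = (∫⁻ x, f x ∂μ) ^ 2 := by rw [h1]
    _ ≤ ((μ U) ^ ((1:ℝ)/2) * (∫⁻ x, f x * f x ∂μ) ^ ((1:ℝ)/2)) ^ 2 := by
        exact pow_le_pow_left' holder 2
    _ = μ U * (∫⁻ x, f x * f x ∂μ) := by
        rw [mul_pow, ← ENNReal.rpow_two, ← ENNReal.rpow_two, ← ENNReal.rpow_mul,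
          ← ENNReal.rpow_mul]
        norm_num
    _ = μ U * (∑ i ∈ s, ∑ j ∈ s, μ (F i ∩ F j)) := by rw [h2]

lemma chung_erdos_real' {X : Type*} [MeasurableSpace X] (μ : Measure X) [IsFiniteMeasure μ]
    (F : ℕ → Set X) (hF : ∀ i, MeasurableSet (F i)) (s : Finset ℕ) :
    (∑ i ∈ s, (μ (F i)).toReal) ^ 2
      ≤ (μ (⋃ i ∈ s, F i)).toReal * ∑ i ∈ s, ∑ j ∈ s, (μ (F i ∩ F j)).toReal := by
  have h := chung_erdos_ennreal μ F hF s
  have hfin : μ (⋃ i ∈ s, F i) * (∑ i ∈ s, ∑ j ∈ s, μ (F i ∩ F j)) ≠ ⊤ := by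
    refine ENNReal.mul_ne_top (measure_ne_top _ _) ?_
    refine (ENNReal.sum_lt_top.2 fun i _ => ?_).ne
    exact ENNReal.sum_lt_top.2 fun j _ => measure_lt_top _ _
  have := ENNReal.toReal_mono hfin h
  rw [ENNReal.toReal_pow, ENNReal.toReal_mul, ENNReal.toReal_sum (fun i _ => measure_ne_top _ _)]
    at this
  rw [ENNReal.toReal_sum (fun i _ => (ENNReal.sum_lt_top.2 fun j _ => measure_lt_top _ _).ne)]
    at this
  calc (∑ i ∈ s, (μ (F i)).toReal) ^ 2 ≤ _ := this
    _ = _ := by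
        refine congrArg _ (Finset.sum_congr rfl fun i _ => ?_)
        exact ENNReal.toReal_sum fun j _ => measure_ne_top _ _


set_option maxHeartbeats 1000000 in
/-- **Divergence Borel--Cantelli with property (M1) gives full measure** (Theorem 1). -/
theorem divergence_borel_cantelli_M1_full_measure
    {X : Type*} [MeasurableSpace X] (μ : Measure X) [IsProbabilityMeasure μ]
    (E : ℕ → Set X) (hE : ∀ i, MeasurableSet (E i))
    (hdiv : ∑' i, μ (E i) = ⊤)
    (C : ℝ) (hC : 0 < C)
    (hquasi : ∃ᶠ Q in atTop,
      ∑ s ∈ Finset.range Q, ∑ t ∈ Finset.range Q, (μ (E s ∩ E t)).toReal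
        ≤ C * (∑ s ∈ Finset.range Q, (μ (E s)).toReal) ^ 2)
    (hM1 : ∀ δ : ℝ, 0 < δ → ∀ q₁ q₂ : ℕ, q₁ < q₂ →
      ∃ i₀ : ℕ, ∀ i ≥ i₀,
        (μ ((⋃ j ∈ Finset.Icc q₁ q₂, E j) ∩ E i)).toReal
          ≤ (1 + δ) * (μ (⋃ j ∈ Finset.Icc q₁ q₂, E j)).toReal * (μ (E i)).toReal) :
    μ (limsup E atTop) = 1 := by
  by_contra hne
  have hlt : μ (limsup E atTop) < 1 := lt_of_le_of_ne prob_le_one hne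
  set L := limsup E atTop with hLdef
  set α : ℝ := (μ L).toReal with hαdef
  have hα0 : 0 ≤ α := ENNReal.toReal_nonneg
  have hα1 : α < 1 := by
    have h := (ENNReal.toReal_lt_toReal (measure_ne_top _ _) ENNReal.one_ne_top).2 hlt
    simpa using h
  -- the tails
  set U : ℕ → Set X := fun t => ⋃ i, ⋃ (_ : t ≤ i), E i with hUdef
  have hUm : ∀ t, MeasurableSet (U t) := fun t =>
    MeasurableSet.iUnion fun i => MeasurableSet.iUnion fun _ => hE i
  have hUanti : Antitone U := by
    intro a b hab x hx
    simp only [hUdef, Set.mem_iUnion] at hx ⊢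
    obtain ⟨i, hbi, hxi⟩ := hx
    exact ⟨i, hab.trans hbi, hxi⟩
  have hLU : L = ⋂ t, U t := by
    rw [hLdef, limsup_eq_iInf_iSup_of_nat]
    simp only [hUdef, Set.iSup_eq_iUnion, Set.iInf_eq_iInter, ge_iff_le]
  have htendU : Tendsto (fun t => (μ (U t)).toReal) atTop (𝓝 α) := by
    have h := tendsto_measure_iInter_atTop (μ := μ) (fun i => (hUm i).nullMeasurableSet) hUanti
      ⟨0, measure_ne_top μ _⟩
    rw [← hLU] at h
    exact (ENNReal.tendsto_toReal (measure_ne_top _ _)).comp h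
  -- choose ε
  have hg : Tendsto (fun e : ℝ => (1 + e) * (α + e)) (𝓝[>] 0) (𝓝 α) := by
    have h : Tendsto (fun e : ℝ => (1 + e) * (α + e)) (𝓝 0) (𝓝 ((1 + 0) * (α + 0))) :=
      (Continuous.tendsto (by fun_prop) 0)
    simpa using h.mono_left nhdsWithin_le_nhds
  have h1 : ∀ᶠ e in 𝓝[>] (0:ℝ), (1 + e) * (α + e) < 1 := hg.eventually_lt_const hα1
  have hh : Tendsto (fun e : ℝ => C * e) (𝓝[>] 0) (𝓝 0) := by
    have h : Tendsto (fun e : ℝ => C * e) (𝓝 0) (𝓝 (C * 0)) :=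
      (Continuous.tendsto (by fun_prop) 0)
    simpa using h.mono_left nhdsWithin_le_nhds
  have hk : Tendsto (fun e : ℝ => (1 - (1 + e) * (α + e)) ^ 2) (𝓝[>] 0)
      (𝓝 ((1 - (1 + 0) * (α + 0)) ^ 2)) :=
    (Continuous.tendsto (by fun_prop) 0).mono_left nhdsWithin_le_nhds
  have h2 : ∀ᶠ e in 𝓝[>] (0:ℝ), C * e < (1 - (1 + e) * (α + e)) ^ 2 := by
    refine hh.eventually_lt hk ?_
    nlinarith
  have h3 : ∀ᶠ e in 𝓝[>] (0:ℝ), e ∈ Set.Ioi (0:ℝ) := eventually_mem_nhdsWithin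
  obtain ⟨ε, hεg, hεC, hεpos⟩ := (h1.and (h2.and h3)).exists
  rw [Set.mem_Ioi] at hεpos
  -- choose q₁
  obtain ⟨q₁, hq₁⟩ := (htendU.eventually_lt_const (show α < α + ε / 2 by linarith)).exists
  -- choose q₂
  have hAmono : Monotone (fun n => ⋃ j ∈ Finset.Icc q₁ n, E j) := by
    intro a b hab x hx
    simp only [Set.mem_iUnion, Finset.mem_Icc] at hx ⊢
    obtain ⟨j, ⟨hj1, hj2⟩, hxj⟩ := hx
    exact ⟨j, ⟨hj1, hj2.trans hab⟩, hxj⟩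
  have hAU : (⋃ n, ⋃ j ∈ Finset.Icc q₁ n, E j) = U q₁ := by
    ext x
    simp only [hUdef, Set.mem_iUnion, Finset.mem_Icc]
    constructor
    · rintro ⟨n, j, ⟨hj1, _⟩, hxj⟩
      exact ⟨j, hj1, hxj⟩
    · rintro ⟨i, hi, hxi⟩
      exact ⟨i, i, ⟨hi, le_rfl⟩, hxi⟩
  have htendA : Tendsto (fun n => (μ (⋃ j ∈ Finset.Icc q₁ n, E j)).toReal) atTop
      (𝓝 (μ (U q₁)).toReal) := by
    have h := tendsto_measure_iUnion_atTop (μ := μ) hAmono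
    rw [hAU] at h
    exact (ENNReal.tendsto_toReal (measure_ne_top _ _)).comp h
  have h4 : ∀ᶠ n in atTop, (μ (U q₁)).toReal - ε / 2 < (μ (⋃ j ∈ Finset.Icc q₁ n, E j)).toReal :=
    htendA.eventually_const_lt (by linarith)
  obtain ⟨q₂, hq₂A, hq₂gt⟩ := (h4.and (eventually_gt_atTop q₁)).exists
  set A := ⋃ j ∈ Finset.Icc q₁ q₂, E j with hAdef
  have hAm : MeasurableSet A := (Finset.Icc q₁ q₂).measurableSet_biUnion fun j _ => hE j
  have hAsubU : A ⊆ U q₁ := by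
    intro x hx
    simp only [hAdef, Set.mem_iUnion, Finset.mem_Icc] at hx
    obtain ⟨j, ⟨hj1, _⟩, hxj⟩ := hx
    simp only [hUdef, Set.mem_iUnion]
    exact ⟨j, hj1, hxj⟩
  have hAle : (μ A).toReal ≤ α + ε := by
    have h := ENNReal.toReal_mono (measure_ne_top μ _) (measure_mono (μ := μ) hAsubU)
    linarith
  set D := U q₁ \ A with hDdef
  have hDle : (μ D).toReal ≤ ε := by
    have hμ : μ D = μ (U q₁) - μ A := measure_diff hAsubU hAm.nullMeasurableSet (measure_ne_top _ _)
    rw [hμ, ENNReal.toReal_sub_of_le (measure_mono hAsubU) (measure_ne_top _ _)]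
    linarith
  obtain ⟨i₀, hi₀⟩ := hM1 ε hεpos q₁ q₂ hq₂gt
  -- the partial sums
  set m : ℕ → ℝ := fun Q => ∑ s ∈ Finset.range Q, (μ (E s)).toReal with hmdef
  have hmnn : ∀ Q, 0 ≤ m Q := fun Q => Finset.sum_nonneg fun i _ => ENNReal.toReal_nonneg
  have hmmono : Monotone m := by
    intro a b hab
    exact Finset.sum_le_sum_of_subset_of_nonneg (Finset.range_subset_range.2 hab)
      fun i _ _ => ENNReal.toReal_nonneg
  have hmtop : Tendsto m atTop atTop := by
    rw [tendsto_atTop]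
    intro b
    have h := ENNReal.tendsto_nat_tsum (fun i => μ (E i))
    rw [hdiv] at h
    filter_upwards [ENNReal.tendsto_nhds_top_iff_nnreal.1 h b.toNNReal] with n hn
    have hfin : ∀ i ∈ Finset.range n, μ (E i) ≠ ⊤ := fun i _ => measure_ne_top _ _
    have h2 : ((b.toNNReal : ℝ≥0∞)).toReal ≤ (∑ i ∈ Finset.range n, μ (E i)).toReal :=
      ENNReal.toReal_mono (ENNReal.sum_lt_top.2 fun i _ => measure_lt_top _ _).ne hn.le
    rw [ENNReal.coe_toReal, ENNReal.toReal_sum hfin] at h2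
    exact le_trans (Real.le_coe_toNNReal b) h2
  set η : ℝ := 1 - (1 + ε) * (α + ε) with hηdef
  have hη0 : 0 < η := by simp only [hηdef]; linarith
  set t' : ℕ := max q₁ i₀ with ht'def
  -- pointwise lower bound on the pruned sets
  have hE' : ∀ i, t' ≤ i → η * (μ (E i)).toReal ≤ (μ (E i \ A)).toReal := by
    intro i hi
    have hM := hi₀ i (le_trans (le_max_right _ _) hi)
    rw [← hAdef, Set.inter_comm] at hM
    have hsum := measure_inter_add_diff (μ := μ) (E i) hAm
    have hsum' : (μ (E i ∩ A)).toReal + (μ (E i \ A)).toReal = (μ (E i)).toReal := by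
      rw [← ENNReal.toReal_add (measure_ne_top _ _) (measure_ne_top _ _), hsum]
    have hnn : 0 ≤ (μ (E i)).toReal := ENNReal.toReal_nonneg
    have hAnn : 0 ≤ (μ A).toReal := ENNReal.toReal_nonneg
    have hprod : 0 ≤ (1 + ε) * ((α + ε) - (μ A).toReal) * (μ (E i)).toReal :=
      mul_nonneg (mul_nonneg (by linarith) (by linarith)) hnn
    rw [hηdef]
    nlinarith [hM]
  -- main estimate
  have hmain : η ^ 2 ≤ C * (μ D).toReal := by
    by_contra hlt2
    push_neg at hlt2
    set r : ℝ := C * (μ D).toReal / η ^ 2 with hrdef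
    have hr0 : 0 ≤ r := by positivity
    have hr1 : r < 1 := (div_lt_one (by positivity)).2 hlt2
    set sR : ℝ := Real.sqrt r with hsRdef
    have hs0 : 0 ≤ sR := Real.sqrt_nonneg _
    have hsq : sR ^ 2 = r := Real.sq_sqrt hr0
    have hs1 : sR < 1 := by nlinarith
    have hev : ∀ᶠ Q in atTop, t' ≤ Q ∧ m t' / (1 - sR) < m Q :=
      (eventually_ge_atTop t').and (hmtop.eventually_gt_atTop _)
    obtain ⟨Q, hQquasi, hQt', hQm⟩ := (hquasi.and_eventually hev).exists
    have hq₁t' : q₁ ≤ t' := le_max_left _ _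
    have hsub1 : Finset.Ico t' Q ⊆ Finset.Ico q₁ Q :=
      Finset.Ico_subset_Ico hq₁t' le_rfl
    have hsub2 : Finset.Ico q₁ Q ⊆ Finset.range Q := by
      intro i hi
      rw [Finset.mem_range]
      exact (Finset.mem_Ico.1 hi).2
    have c4 : η * (m Q - m t') ≤ ∑ i ∈ Finset.Ico q₁ Q, (μ (E i \ A)).toReal := by
      have e1 : ∑ i ∈ Finset.Ico t' Q, (μ (E i)).toReal = m Q - m t' :=
        Finset.sum_Ico_eq_sub _ hQt'
      rw [← e1, Finset.mul_sum]
      calc ∑ i ∈ Finset.Ico t' Q, η * (μ (E i)).toReal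
          ≤ ∑ i ∈ Finset.Ico t' Q, (μ (E i \ A)).toReal :=
            Finset.sum_le_sum fun i hi => hE' i (Finset.mem_Ico.1 hi).1
        _ ≤ ∑ i ∈ Finset.Ico q₁ Q, (μ (E i \ A)).toReal :=
            Finset.sum_le_sum_of_subset_of_nonneg hsub1 fun i _ _ => ENNReal.toReal_nonneg
    have c1 := chung_erdos_real' μ (fun i => E i \ A) (fun i => (hE i).diff hAm)
      (Finset.Ico q₁ Q)
    have c2 : (μ (⋃ i ∈ Finset.Ico q₁ Q, E i \ A)).toReal ≤ (μ D).toReal := by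
      refine ENNReal.toReal_mono (measure_ne_top _ _) (measure_mono ?_)
      intro x hx
      simp only [Set.mem_iUnion, Finset.mem_Ico] at hx
      obtain ⟨i, ⟨hi1, _⟩, hxi, hxA⟩ := hx
      refine ⟨?_, hxA⟩
      simp only [hUdef, Set.mem_iUnion]
      exact ⟨i, hi1, hxi⟩
    have c3 : ∑ i ∈ Finset.Ico q₁ Q, ∑ j ∈ Finset.Ico q₁ Q,
        (μ ((E i \ A) ∩ (E j \ A))).toReal ≤ C * m Q ^ 2 := by
      refine le_trans ?_ hQquasi
      refine le_trans (Finset.sum_le_sum fun i _ => ?_)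
        (Finset.sum_le_sum_of_subset_of_nonneg hsub2 fun i _ _ =>
          Finset.sum_nonneg fun j _ => ENNReal.toReal_nonneg)
      refine le_trans (Finset.sum_le_sum fun j _ => ?_)
        (Finset.sum_le_sum_of_subset_of_nonneg hsub2 fun j _ _ => ENNReal.toReal_nonneg)
      exact ENNReal.toReal_mono (measure_ne_top _ _)
        (measure_mono (Set.inter_subset_inter Set.diff_subset Set.diff_subset))
    have hmQ0 : 0 ≤ m Q := hmnn Q
    have hmtt : m t' ≤ m Q := hmmono hQt'
    have hkey : (η * (m Q - m t')) ^ 2 ≤ (μ D).toReal * (C * m Q ^ 2) := by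
      calc (η * (m Q - m t')) ^ 2
          ≤ (∑ i ∈ Finset.Ico q₁ Q, (μ (E i \ A)).toReal) ^ 2 :=
            pow_le_pow_left₀ (mul_nonneg hη0.le (by linarith)) c4 2
        _ ≤ (μ (⋃ i ∈ Finset.Ico q₁ Q, E i \ A)).toReal * ∑ i ∈ Finset.Ico q₁ Q,
              ∑ j ∈ Finset.Ico q₁ Q, (μ ((E i \ A) ∩ (E j \ A))).toReal := c1
        _ ≤ (μ D).toReal * (C * m Q ^ 2) := by
            refine mul_le_mul c2 c3 ?_ ENNReal.toReal_nonneg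
            exact Finset.sum_nonneg fun i _ => Finset.sum_nonneg fun j _ =>
              ENNReal.toReal_nonneg
    have hCD : (μ D).toReal * C = sR ^ 2 * η ^ 2 := by
      rw [hsq, hrdef]
      field_simp
    have hd0 : 0 ≤ sR * m Q := mul_nonneg hs0 hmQ0
    have e : (μ D).toReal * (C * m Q ^ 2) = (sR * m Q * η) ^ 2 := by
      have : (μ D).toReal * (C * m Q ^ 2) = ((μ D).toReal * C) * m Q ^ 2 := by ring
      rw [this, hCD]; ring
    have hdd : (η * (m Q - m t')) ^ 2 ≤ (sR * m Q * η) ^ 2 := by rw [← e]; exact hkey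
    have h6 : η * (m Q - m t') ≤ sR * m Q * η := by
      have h7 := Real.sqrt_le_sqrt hdd
      rwa [Real.sqrt_sq (mul_nonneg hη0.le (by linarith)),
        Real.sqrt_sq (mul_nonneg hd0 hη0.le)] at h7
    have hfinal : m Q - m t' ≤ sR * m Q := by nlinarith [h6, hη0]
    have : m Q ≤ m t' / (1 - sR) := by
      rw [le_div_iff₀ (by linarith)]
      nlinarith
    linarith
  -- conclusion
  have hfin : C * (μ D).toReal ≤ C * ε := mul_le_mul_of_nonneg_left hDle hC.le
  linarith
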